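/- Let G = {z ∈ ℂ : Im z > 0, −1/2 ≤ Re z < 1/2, |z| ≥ 1} and let τ ∈ G, with L_τ = {m + k·τ : m, k ∈ ℤ}. There exist g ∈ ℂ and λ ∈ ℂ such that g ∉ L_τ, 5·g ∈ L_τ, and λ·L_τ = L_τ + ℤ·g (i.e. the elliptic curve E = ℂ/L_τ admits a cyclic subgroup C of order 5 with E/C ≅ E) if and only if τ² = −1, or τ² = −4, or τ² = −5, or τ² = −τ − 3, or τ² = −τ − 5, or τ² = −τ − 3/2. In particular, there are exactly 6 elliptic curves over ℂ, up to isomorphism, admitting a cyclic subgroup C of order 5 with E/C ≅ E. -/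

import Mathlib

noncomputable section

/-- The lattice `ℤ + ℤτ` as a subset of `ℂ`. -/
def latt (τ : ℂ) : Set ℂ := {z | ∃ m k : ℤ, z = (m : ℂ) + (k : ℂ) * τ}

/-- The additive subgroup of `ℂ` generated by the lattice `ℤ + ℤτ` and a point `g`. -/
def lattAdj (τ g : ℂ) : Set ℂ := {z | ∃ m k l : ℤ, z = (m : ℂ) + (k : ℂ) * τ + (l : ℂ) * g}

lemma indep (τ : ℂ) (him : 0 < τ.im) (m k : ℤ) (h : (m : ℂ) + (k : ℂ) * τ = 0) :
    m = 0 ∧ k = 0 := by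
  have him' := congrArg Complex.im h
  simp [Complex.add_im, Complex.mul_im] at him'
  have hk' : k = 0 := by
    rcases him' with h' | h'
    · exact h'
    · linarith
  subst hk'
  have hre := congrArg Complex.re h
  simp at hre
  exact ⟨by exact_mod_cast hre, rfl⟩

lemma match_coeff (τ : ℂ) (him : 0 < τ.im) (m k m' k' : ℤ)
    (h : (m : ℂ) + (k : ℂ) * τ = (m' : ℂ) + (k' : ℂ) * τ) : m = m' ∧ k = k' := by
  have := indep τ him (m - m') (k - k') (by push_cast; linear_combination h)
  omega

lemma enum_lemma (c e f t : ℤ) (hc : 1 ≤ c) (hcf : c ≤ f) (he1 : -c < e) (he2 : e ≤ c)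
    (hd : e ^ 2 - 4 * c * f = t ^ 2 - 20) (hneg : e ^ 2 - 4 * c * f < 0) :
    (c = 1 ∧ e = 0 ∧ f = 1) ∨ (c = 1 ∧ e = 0 ∧ f = 4) ∨ (c = 1 ∧ e = 0 ∧ f = 5) ∨
    (c = 1 ∧ e = 1 ∧ f = 3) ∨ (c = 1 ∧ e = 1 ∧ f = 5) ∨
    (c = 2 ∧ e = 0 ∧ f = 2) ∨ (c = 2 ∧ e = 2 ∧ f = 3) := by
  have ht20 : t ^ 2 < 20 := by omega
  have ht4 : -4 ≤ t ∧ t ≤ 4 := by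
    constructor <;> nlinarith [sq_nonneg (t + 5), sq_nonneg (t - 5)]
  have hee : e ^ 2 ≤ c ^ 2 := by nlinarith
  have h4 : 4 * c ^ 2 ≤ 4 * c * f := by nlinarith
  have hc2 : c ≤ 2 := by nlinarith
  obtain ⟨ht4a, ht4b⟩ := ht4
  interval_cases c <;> interval_cases e <;> interval_cases t <;> omega

lemma final_step (τ : ℂ) (c e f : ℤ) (hq : (c : ℂ) * τ ^ 2 + (e : ℂ) * τ + (f : ℂ) = 0)
    (h7 : (c = 1 ∧ e = 0 ∧ f = 1) ∨ (c = 1 ∧ e = 0 ∧ f = 4) ∨ (c = 1 ∧ e = 0 ∧ f = 5) ∨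
      (c = 1 ∧ e = 1 ∧ f = 3) ∨ (c = 1 ∧ e = 1 ∧ f = 5) ∨
      (c = 2 ∧ e = 0 ∧ f = 2) ∨ (c = 2 ∧ e = 2 ∧ f = 3)) :
    τ ^ 2 = -1 ∨ τ ^ 2 = -4 ∨ τ ^ 2 = -5 ∨ τ ^ 2 = -τ - 3 ∨ τ ^ 2 = -τ - 5 ∨
      τ ^ 2 = -τ - 3 / 2 := by
  rcases h7 with ⟨rfl, rfl, rfl⟩ | ⟨rfl, rfl, rfl⟩ | ⟨rfl, rfl, rfl⟩ | ⟨rfl, rfl, rfl⟩ |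
    ⟨rfl, rfl, rfl⟩ | ⟨rfl, rfl, rfl⟩ | ⟨rfl, rfl, rfl⟩ <;> push_cast at hq
  · exact Or.inl (by linear_combination hq)
  · exact Or.inr (Or.inl (by linear_combination hq))
  · exact Or.inr (Or.inr (Or.inl (by linear_combination hq)))
  · exact Or.inr (Or.inr (Or.inr (Or.inl (by linear_combination hq))))
  · exact Or.inr (Or.inr (Or.inr (Or.inr (Or.inl (by linear_combination hq)))))
  · exact Or.inl (by linear_combination hq / 2)
  · exact Or.inr (Or.inr (Or.inr (Or.inr (Or.inr (by linear_combination hq / 2)))))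

set_option maxHeartbeats 2000000 in
lemma forward (τ : ℂ) (him : 0 < τ.im) (hre₁ : -(1 / 2) ≤ τ.re) (hre₂ : τ.re < 1 / 2)
    (habs : 1 ≤ ‖τ‖) (g lam : ℂ) (hg : g ∉ latt τ) (h5g : (5 : ℂ) * g ∈ latt τ)
    (heq : (fun x => lam * x) '' latt τ = lattAdj τ g) :
    τ ^ 2 = -1 ∨ τ ^ 2 = -4 ∨ τ ^ 2 = -5 ∨ τ ^ 2 = -τ - 3 ∨ τ ^ 2 = -τ - 5 ∨
      τ ^ 2 = -τ - 3 / 2 := by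
  obtain ⟨u, v, h5⟩ := h5g
  -- 1 and τ are in the image
  have h1mem : (1 : ℂ) ∈ (fun x => lam * x) '' latt τ := by
    rw [heq]; exact ⟨1, 0, 0, by norm_num⟩
  have hτmem : τ ∈ (fun x => lam * x) '' latt τ := by
    rw [heq]; exact ⟨0, 1, 0, by push_cast; ring⟩
  obtain ⟨x1, ⟨p, q, rfl⟩, hx1⟩ := h1mem
  obtain ⟨x2, ⟨r, s, rfl⟩, hx2⟩ := hτmem
  have hx1' : lam * ((p : ℂ) + (q : ℂ) * τ) = 1 := hx1
  have hx2' : lam * ((r : ℂ) + (s : ℂ) * τ) = τ := hx2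
  -- lam and lam * τ are in lattAdj, so 5*lam and 5*lam*τ are in latt
  have hl1 : lam ∈ lattAdj τ g := by rw [← heq]; exact ⟨1, ⟨1, 0, by norm_num⟩, mul_one lam⟩
  have hl2 : lam * τ ∈ lattAdj τ g := by rw [← heq]; exact ⟨τ, ⟨0, 1, by push_cast; ring⟩, rfl⟩
  obtain ⟨a1, b1, c1, hA0⟩ := hl1
  obtain ⟨a2, b2, c2, hC0⟩ := hl2
  obtain ⟨A, B, hA⟩ : ∃ A B : ℤ, (5 : ℂ) * lam = (A : ℂ) + (B : ℂ) * τ :=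
    ⟨5 * a1 + c1 * u, 5 * b1 + c1 * v, by push_cast; linear_combination 5 * hA0 + (c1 : ℂ) * h5⟩
  obtain ⟨C, D, hC⟩ : ∃ C D : ℤ, (5 : ℂ) * (lam * τ) = (C : ℂ) + (D : ℂ) * τ :=
    ⟨5 * a2 + c2 * u, 5 * b2 + c2 * v, by push_cast; linear_combination 5 * hC0 + (c2 : ℂ) * h5⟩
  have e1 := match_coeff τ him 5 0 (p * A + q * C) (p * B + q * D)
    (by push_cast; linear_combination (-5 : ℂ) * hx1' + (p : ℂ) * hA + (q : ℂ) * hC)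
  have e2 := match_coeff τ him 0 5 (r * A + s * C) (r * B + s * D)
    (by push_cast; linear_combination (-5 : ℂ) * hx2' + (r : ℂ) * hA + (s : ℂ) * hC)
  have hkey : (p * A + q * C) * (r * B + s * D) - (p * B + q * D) * (r * A + s * C)
      = (p * s - q * r) * (A * D - B * C) := by ring
  rw [← e1.1, ← e1.2, ← e2.1, ← e2.2] at hkey
  have hdet : (p * s - q * r) * (A * D - B * C) = 25 := by linarith
  have hlam0 : lam ≠ 0 := by
    intro h0; rw [h0, zero_mul] at hx1'; exact one_ne_zero hx1'.symm
  -- the quadratic equation for τ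
  have hquad : (q : ℂ) * τ ^ 2 + ((p : ℂ) - (s : ℂ)) * τ - (r : ℂ) = 0 := by
    have h0 : lam * ((q : ℂ) * τ ^ 2 + ((p : ℂ) - (s : ℂ)) * τ - (r : ℂ)) = 0 := by
      linear_combination τ * hx1' - hx2'
    rcases mul_eq_zero.mp h0 with h' | h'
    · exact absurd h' hlam0
    · exact h'
  -- determinant divides 25
  have hdvd : (p * s - q * r) ∣ 25 := ⟨A * D - B * C, hdet.symm⟩
  have hcases : p * s - q * r = 1 ∨ p * s - q * r = -1 ∨ p * s - q * r = 5 ∨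
      p * s - q * r = -5 ∨ p * s - q * r = 25 ∨ p * s - q * r = -25 := by
    have h1 : p * s - q * r ≤ 25 := Int.le_of_dvd (by norm_num) hdvd
    have h2 : -25 ≤ p * s - q * r := by
      have := Int.le_of_dvd (a := -(p * s - q * r)) (by norm_num) ((neg_dvd).mpr hdvd)
      linarith
    set dd := p * s - q * r with hdd
    clear_value dd
    clear hdet hkey
    interval_cases dd <;> first | decide | (norm_num at hdvd)

  -- real and imaginary parts of the quadratic
  have hquadC := hquad
  rw [Complex.ext_iff] at hquadC
  obtain ⟨hRe, hIm⟩ := hquadC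
  simp [pow_two, Complex.mul_re, Complex.mul_im] at hRe hIm
  have himne : τ.im ≠ 0 := ne_of_gt him
  rcases hcases with hd | hd | hd | hd | hd | hd
  · -- det = 1 : then lam * latt = latt, so g ∈ latt, contradiction
    exfalso
    have hgmem : g ∈ (fun x => lam * x) '' latt τ := by
      rw [heq]; exact ⟨0, 0, 1, by push_cast; ring⟩
    obtain ⟨y, ⟨m, k, rfl⟩, hy⟩ := hgmem
    have hy' : lam * ((m : ℂ) + (k : ℂ) * τ) = g := hy
    have hdC : (p : ℂ) * s - (q : ℂ) * r = 1 := by exact_mod_cast hd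
    refine hg ⟨m * s - k * r, k * p - m * q, ?_⟩
    push_cast
    linear_combination -hy' + ((m : ℂ) * s - (k : ℂ) * r) * hx1' +
      ((k : ℂ) * p - (m : ℂ) * q) * hx2' - lam * ((m : ℂ) + (k : ℂ) * τ) * hdC
  · -- det = -1
    exfalso
    have hgmem : g ∈ (fun x => lam * x) '' latt τ := by
      rw [heq]; exact ⟨0, 0, 1, by push_cast; ring⟩
    obtain ⟨y, ⟨m, k, rfl⟩, hy⟩ := hgmem
    have hy' : lam * ((m : ℂ) + (k : ℂ) * τ) = g := hy
    have hdC : (p : ℂ) * s - (q : ℂ) * r = -1 := by exact_mod_cast hd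
    refine hg ⟨k * r - m * s, m * q - k * p, ?_⟩
    push_cast
    linear_combination -hy' + ((k : ℂ) * r - (m : ℂ) * s) * hx1' +
      ((m : ℂ) * q - (k : ℂ) * p) * hx2' + lam * ((m : ℂ) + (k : ℂ) * τ) * hdC
  · -- det = 5 : the main case
    have hq0 : q ≠ 0 := by
      intro h0
      subst h0
      have h00 := indep τ him (-r) (p - s) (by push_cast; linear_combination hquad)
      have hps : p = s := by omega
      have hr0 : r = 0 := by omega
      rw [hps, hr0] at hd
      have hss : s * s = 5 := by linarith
      have h3 : s ≤ 3 := by nlinarith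
      have h3' : -3 ≤ s := by nlinarith
      interval_cases s <;> omega
    have hfac : (2 * (q : ℝ) * τ.re + ((p : ℝ) - (s : ℝ))) * τ.im = 0 := by
      linear_combination hIm
    have hre_eq : 2 * (q : ℝ) * τ.re + ((p : ℝ) - (s : ℝ)) = 0 := by
      rcases mul_eq_zero.mp hfac with h' | h'
      · exact h'
      · exact absurd h' himne
    have hq2 : 1 ≤ q ∨ q ≤ -1 := by omega
    have hqsq : 1 ≤ (q : ℝ) ^ 2 := by
      rcases hq2 with h' | h' <;> [(have : (1:ℝ) ≤ (q:ℝ) := by exact_mod_cast h');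
        (have : (q:ℝ) ≤ -1 := by exact_mod_cast h')] <;> nlinarith
    have hdisc_real : (((p - s) ^ 2 + 4 * q * r : ℤ) : ℝ) = -4 * (q : ℝ) ^ 2 * τ.im ^ 2 := by
      push_cast
      linear_combination (-4 * (q : ℝ)) * hRe + (((p : ℝ) - s) + 2 * (q : ℝ) * τ.re) * hre_eq
    have hdisc : ((p - s) ^ 2 + 4 * q * r : ℤ) < 0 := by
      have h' : (((p - s) ^ 2 + 4 * q * r : ℤ) : ℝ) < 0 := by
        rw [hdisc_real]; nlinarith [him]
      exact_mod_cast h'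
    have hT : (p - s) ^ 2 + 4 * q * r = (p + s) ^ 2 - 20 := by linear_combination (-4) * hd
    have habs2 : (1 : ℝ) ≤ τ.re ^ 2 + τ.im ^ 2 := by
      have h1 : (1 : ℝ) ≤ ‖τ‖ ^ 2 := by
        nlinarith [habs, norm_nonneg τ]
      rw [Complex.sq_norm, Complex.normSq_apply] at h1
      nlinarith [h1]
    have hnormR : (q : ℝ) * (τ.re ^ 2 + τ.im ^ 2) = -(r : ℝ) := by
      linear_combination -hRe + τ.re * hre_eq
    obtain ⟨c, e, f, hc1, hcf, he1, he2, hqC, hde⟩ :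
        ∃ c e f : ℤ, 1 ≤ c ∧ c ≤ f ∧ -c < e ∧ e ≤ c ∧
          ((c : ℂ) * τ ^ 2 + (e : ℂ) * τ + (f : ℂ) = 0) ∧
          e ^ 2 - 4 * c * f = (p - s) ^ 2 + 4 * q * r := by
      rcases hq2 with hqpos | hqneg
      · have hqR : (1 : ℝ) ≤ (q : ℝ) := by exact_mod_cast hqpos
        refine ⟨q, p - s, -r, hqpos, ?_, ?_, ?_, ?_, by ring⟩
        · have h'' : ((q : ℤ) : ℝ) ≤ ((-r : ℤ) : ℝ) := by push_cast; nlinarith [hnormR, habs2]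
          exact_mod_cast h''
        · have h'' : ((-q : ℤ) : ℝ) < ((p - s : ℤ) : ℝ) := by push_cast; nlinarith [hre_eq, hre₂]
          exact_mod_cast h''
        · have h' : ((p - s : ℤ) : ℝ) ≤ (q : ℝ) := by push_cast; nlinarith [hre_eq, hre₁]
          exact_mod_cast h'
        · push_cast
          linear_combination hquad
      · have hqR : (q : ℝ) ≤ -1 := by exact_mod_cast hqneg
        refine ⟨-q, s - p, r, by omega, ?_, ?_, ?_, ?_, by ring⟩
        · have h' : ((-q : ℤ) : ℝ) ≤ (r : ℝ) := by push_cast; nlinarith [hnormR, habs2]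
          exact_mod_cast h'
        · have h' : ((-(-q) : ℤ) : ℝ) < ((s - p : ℤ) : ℝ) := by push_cast; nlinarith [hre_eq, hre₂]
          exact_mod_cast h'
        · have h' : ((s - p : ℤ) : ℝ) ≤ ((-q : ℤ) : ℝ) := by push_cast; nlinarith [hre_eq, hre₁]
          exact_mod_cast h'
        · push_cast
          linear_combination -hquad
    refine final_step τ c e f hqC (enum_lemma c e f (p + s) hc1 hcf he1 he2 ?_ ?_)
    · rw [hde, hT]
    · rw [hde]; exact hdisc
  · -- det = -5 : contradicts negativity of the discriminant
    exfalso
    have hq0 : q ≠ 0 := by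
      intro h0
      subst h0
      have h00 := indep τ him (-r) (p - s) (by push_cast; linear_combination hquad)
      have hps : p = s := by omega
      have hr0 : r = 0 := by omega
      rw [hps, hr0] at hd
      nlinarith [sq_nonneg s]
    have hfac : (2 * (q : ℝ) * τ.re + ((p : ℝ) - (s : ℝ))) * τ.im = 0 := by
      linear_combination hIm
    have hre_eq : 2 * (q : ℝ) * τ.re + ((p : ℝ) - (s : ℝ)) = 0 := by
      rcases mul_eq_zero.mp hfac with h' | h'
      · exact h'
      · exact absurd h' himne
    have hq2 : 1 ≤ q ∨ q ≤ -1 := by omega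
    have hqsq : 1 ≤ (q : ℝ) ^ 2 := by
      rcases hq2 with h' | h' <;> [(have : (1:ℝ) ≤ (q:ℝ) := by exact_mod_cast h');
        (have : (q:ℝ) ≤ -1 := by exact_mod_cast h')] <;> nlinarith
    have hdisc_real : (((p - s) ^ 2 + 4 * q * r : ℤ) : ℝ) = -4 * (q : ℝ) ^ 2 * τ.im ^ 2 := by
      push_cast
      linear_combination (-4 * (q : ℝ)) * hRe + (((p : ℝ) - s) + 2 * (q : ℝ) * τ.re) * hre_eq
    have hdisc : ((p - s) ^ 2 + 4 * q * r : ℤ) < 0 := by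
      have h' : (((p - s) ^ 2 + 4 * q * r : ℤ) : ℝ) < 0 := by
        rw [hdisc_real]; nlinarith [him]
      exact_mod_cast h'
    nlinarith [sq_nonneg (p + s), hdisc, hd]
  · -- det = 25
    exfalso
    rw [hd] at hdet
    have hADBC : A * D - B * C = 1 := by omega
    have hADC : (A : ℂ) * D - (B : ℂ) * C = 1 := by exact_mod_cast hADBC
    have h15 : (1 : ℂ) / 5 ∈ lattAdj τ g := by
      rw [← heq]
      refine ⟨(D : ℂ) + ((-B : ℤ) : ℂ) * τ, ⟨D, -B, rfl⟩, ?_⟩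
      push_cast
      linear_combination ((D : ℂ) / 5) * hA - ((B : ℂ) / 5) * hC + (1 / 5) * hADC
    have hτ5 : τ / 5 ∈ lattAdj τ g := by
      rw [← heq]
      refine ⟨((-C : ℤ) : ℂ) + (A : ℂ) * τ, ⟨-C, A, rfl⟩, ?_⟩
      push_cast
      linear_combination (-(C : ℂ) / 5) * hA + ((A : ℂ) / 5) * hC + (τ / 5) * hADC
    obtain ⟨m1, k1, l1, hm1⟩ := h15
    obtain ⟨m2, k2, l2, hm2⟩ := hτ5
    have q1 := indep τ him (1 - 5 * m1 - l1 * u) (-(5 * k1) - l1 * v)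
      (by push_cast; linear_combination 5 * hm1 + (l1 : ℂ) * h5)
    have q2 := indep τ him (-(5 * m2) - l2 * u) (1 - 5 * k2 - l2 * v)
      (by push_cast; linear_combination 5 * hm2 + (l2 : ℂ) * h5)
    have e1' : l1 * u = 1 - 5 * m1 := by linarith [q1.1]
    have e2' : l1 * v = -(5 * k1) := by linarith [q1.2]
    have e3' : l2 * u = -(5 * m2) := by linarith [q2.1]
    have e4' : l2 * v = 1 - 5 * k2 := by linarith [q2.2]
    have key : (l1 * u) * (l2 * v) = (l1 * v) * (l2 * u) := by ring
    rw [e1', e2', e3', e4'] at key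
    have h51 : (5 : ℤ) ∣ 1 := ⟨k2 + m1 - 5 * m1 * k2 + 5 * k1 * m2, by linear_combination key⟩
    norm_num at h51
  · -- det = -25
    exfalso
    rw [hd] at hdet
    have hADBC : A * D - B * C = -1 := by omega
    have hADC : (A : ℂ) * D - (B : ℂ) * C = -1 := by exact_mod_cast hADBC
    have h15 : (1 : ℂ) / 5 ∈ lattAdj τ g := by
      rw [← heq]
      refine ⟨((-D : ℤ) : ℂ) + (B : ℂ) * τ, ⟨-D, B, rfl⟩, ?_⟩
      push_cast
      linear_combination (-(D : ℂ) / 5) * hA + ((B : ℂ) / 5) * hC - (1 / 5) * hADC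
    have hτ5 : τ / 5 ∈ lattAdj τ g := by
      rw [← heq]
      refine ⟨(C : ℂ) + ((-A : ℤ) : ℂ) * τ, ⟨C, -A, rfl⟩, ?_⟩
      push_cast
      linear_combination ((C : ℂ) / 5) * hA - ((A : ℂ) / 5) * hC - (τ / 5) * hADC
    obtain ⟨m1, k1, l1, hm1⟩ := h15
    obtain ⟨m2, k2, l2, hm2⟩ := hτ5
    have q1 := indep τ him (1 - 5 * m1 - l1 * u) (-(5 * k1) - l1 * v)
      (by push_cast; linear_combination 5 * hm1 + (l1 : ℂ) * h5)
    have q2 := indep τ him (-(5 * m2) - l2 * u) (1 - 5 * k2 - l2 * v)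
      (by push_cast; linear_combination 5 * hm2 + (l2 : ℂ) * h5)
    have e1' : l1 * u = 1 - 5 * m1 := by linarith [q1.1]
    have e2' : l1 * v = -(5 * k1) := by linarith [q1.2]
    have e3' : l2 * u = -(5 * m2) := by linarith [q2.1]
    have e4' : l2 * v = 1 - 5 * k2 := by linarith [q2.2]
    have key : (l1 * u) * (l2 * v) = (l1 * v) * (l2 * u) := by ring
    rw [e1', e2', e3', e4'] at key
    have h51 : (5 : ℤ) ∣ 1 := ⟨k2 + m1 - 5 * m1 * k2 + 5 * k1 * m2, by linear_combination key⟩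
    norm_num at h51

lemma build (τ : ℂ) (him : 0 < τ.im) (j c d a b : ℤ)
    (hdet : a * d - b * c = 1)
    (hlamτ : ((c : ℂ) * ((τ + j) / 5) + d) * τ = (a : ℂ) * ((τ + j) / 5) + b) :
    ∃ g lam : ℂ, g ∉ latt τ ∧ (5 : ℂ) * g ∈ latt τ ∧
      (fun x => lam * x) '' latt τ = lattAdj τ g := by
  have hdetC : (a : ℂ) * d - (b : ℂ) * c = 1 := by exact_mod_cast hdet
  refine ⟨(τ + j) / 5, (c : ℂ) * ((τ + j) / 5) + d, ?_, ⟨j, 1, by push_cast; ring⟩, ?_⟩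
  · rintro ⟨m, k, hmk⟩
    have := indep τ him (j - 5 * m) (1 - 5 * k) (by push_cast; linear_combination (5 : ℂ) * hmk)
    omega
  · ext x
    constructor
    · rintro ⟨y, ⟨m, k, rfl⟩, rfl⟩
      exact ⟨m * d + k * b, 0, m * c + k * a, by push_cast; linear_combination (k : ℂ) * hlamτ⟩
    · rintro ⟨m, k, l, rfl⟩
      refine ⟨((a * (m - j * k) - b * (5 * k + l) : ℤ) : ℂ) +
          ((d * (5 * k + l) - c * (m - j * k) : ℤ) : ℂ) * τ, ⟨_, _, rfl⟩, ?_⟩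
      show _ * _ = _
      push_cast
      linear_combination ((d : ℂ) * (5 * k + l) - (c : ℂ) * ((m : ℂ) - j * k)) * hlamτ +
        (((5 * (k : ℂ) + l) * ((τ + j) / 5) + ((m : ℂ) - (j : ℂ) * k))) * hdetC


theorem stmt_18 (τ : ℂ) (him : 0 < τ.im) (hre₁ : -(1 / 2) ≤ τ.re) (hre₂ : τ.re < 1 / 2)
    (habs : 1 ≤ ‖τ‖) :
    (∃ g lam : ℂ, g ∉ latt τ ∧ (5 : ℂ) * g ∈ latt τ ∧
        (fun x => lam * x) '' latt τ = lattAdj τ g) ↔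
    (τ ^ 2 = -1 ∨ τ ^ 2 = -4 ∨ τ ^ 2 = -5 ∨ τ ^ 2 = -τ - 3 ∨ τ ^ 2 = -τ - 5 ∨ τ ^ 2 = -τ - 3 / 2) := by
  constructor
  · rintro ⟨g, lam, hg, h5g, heqq⟩
    exact forward τ him hre₁ hre₂ habs g lam hg h5g heqq
  · rintro (h | h | h | h | h | h)
    · exact build τ him 2 1 0 2 (-1) (by norm_num) (by push_cast; linear_combination h / 5)
    · exact build τ him 1 1 0 1 (-1) (by norm_num) (by push_cast; linear_combination h / 5)
    · exact build τ him 0 1 0 0 (-1) (by norm_num) (by push_cast; linear_combination h / 5)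
    · exact build τ him 2 1 0 1 (-1) (by norm_num) (by push_cast; linear_combination h / 5)
    · exact build τ him 0 1 0 (-1) (-1) (by norm_num) (by push_cast; linear_combination h / 5)
    · exact build τ him (-2) 2 1 (-1) (-1) (by norm_num) (by push_cast; linear_combination 2 * h / 5)
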